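/- For every t in a field of characteristic ≠ 2 with t ∉ {0, 1, −1, 3, −3, 5}, the point (x,y) = ((t−3)(t+3)(t−1)(t+1), 4(t−3)(t+3)(t−1)(t+1)) is a point of order exactly 6 on the elliptic curve y^2 = x(x^2 + Ax + B) with A = −2t^4 + 12t^2 + 6 and B = (t+3)(t−3)(t+1)^3(t−1)^3. -/

import Mathlib

/-- The universal elliptic curve `F₂,₆ᵗ : y² = x(x² + Ax + B)` with
`A = −2t⁴ + 12t² + 6` and `B = (t+3)(t−3)(t+1)³(t−1)³`. -/
def F26 (F : Type*) [Field F] (t : F) : WeierstrassCurve.Affine F :=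
  { a₁ := 0, a₂ := -2*t^4 + 12*t^2 + 6, a₃ := 0,
    a₄ := (t+3)*(t-3)*(t+1)^3*(t-1)^3, a₆ := 0 }

open WeierstrassCurve.Affine WeierstrassCurve.Affine.Point

lemma some_eq_some' {F : Type*} [Field F] {W : WeierstrassCurve.Affine F}
    {x₁ y₁ x₂ y₂ : F} (hx : x₁ = x₂) (hy : y₁ = y₂)
    (h₁ : W.Nonsingular x₁ y₁) (h₂ : W.Nonsingular x₂ y₂) :
    Point.some _ _ h₁ = Point.some _ _ h₂ := by subst hx; subst hy; rfl

open Classical in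
/-- For every `t` in a field of characteristic ≠ 2 with `t ∉ {0, 1, −1, 3, −3, 5}`, the point
`((t−3)(t+3)(t−1)(t+1), 4(t−3)(t+3)(t−1)(t+1))` is a point of order exactly 6 on the elliptic
curve `y² = x(x² + Ax + B)` with `A = −2t⁴ + 12t² + 6`, `B = (t+3)(t−3)(t+1)³(t−1)³`. -/
theorem stmt14 (F : Type*) [Field F] (h2 : (2 : F) ≠ 0) (t : F)
    (h0 : t ≠ 0) (h1 : t ≠ 1) (h1' : t ≠ -1) (h3 : t ≠ 3) (h3' : t ≠ -3) (h5 : t ≠ 5) :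
    ∃ h : (F26 F t).Nonsingular ((t-3)*(t+3)*(t-1)*(t+1)) (4*((t-3)*(t+3)*(t-1)*(t+1))),
      addOrderOf (WeierstrassCurve.Affine.Point.some _ _ h) = 6 := by
  have hm3 : t - 3 ≠ 0 := sub_ne_zero.mpr h3
  have hp3 : t + 3 ≠ 0 := fun h => h3' (by linear_combination h)
  have hm1 : t - 1 ≠ 0 := sub_ne_zero.mpr h1
  have hp1 : t + 1 ≠ 0 := fun h => h1' (by linear_combination h)
  have h4 : (4 : F) ≠ 0 := by
    have := mul_ne_zero h2 h2; intro h; exact this (by linear_combination h)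
  have h8 : (8 : F) ≠ 0 := by
    have := mul_ne_zero h2 h4; intro h; exact this (by linear_combination h)
  set x0 : F := (t-3)*(t+3)*(t-1)*(t+1) with hx0def
  have hx0 : x0 ≠ 0 := mul_ne_zero (mul_ne_zero (mul_ne_zero hm3 hp3) hm1) hp1
  have hneg : ∀ x y : F, (F26 F t).negY x y = -y := by
    intro x y; simp [WeierstrassCurve.Affine.negY, F26]
  -- nonsingularity of P
  have hP : (F26 F t).Nonsingular x0 (4*x0) := by
    rw [nonsingular_iff, equation_iff]
    refine ⟨by simp only [F26, hx0def]; ring, Or.inr ?_⟩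
    simp only [F26]
    intro h
    exact mul_ne_zero h8 hx0 (by linear_combination h)
  -- nonsingularity of Q = 2P
  have hQ : (F26 F t).Nonsingular ((t^2-1)^2) (4*(t^2-1)^2) := by
    rw [nonsingular_iff, equation_iff]
    refine ⟨by simp only [F26]; ring, Or.inr ?_⟩
    simp only [F26]
    intro h
    exact mul_ne_zero h8 (mul_ne_zero (mul_ne_zero hm1 hp1) (mul_ne_zero hm1 hp1))
      (by linear_combination h)
  -- nonsingularity of T = 3P = (0,0)
  have hT : (F26 F t).Nonsingular 0 0 := by
    rw [nonsingular_iff, equation_iff]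
    refine ⟨by simp only [F26]; ring, Or.inl ?_⟩
    simp only [F26]
    intro h
    exact mul_ne_zero (mul_ne_zero (mul_ne_zero hm3 hp3)
      (mul_ne_zero (mul_ne_zero hp1 hp1) hp1)) (mul_ne_zero (mul_ne_zero hm1 hm1) hm1)
      (by linear_combination -h)
  have hyP : (4*x0 : F) ≠ (F26 F t).negY x0 (4*x0) := by
    rw [hneg]; intro h; exact mul_ne_zero h8 hx0 (by linear_combination h)
  -- slope for doubling P
  have hs1 : (F26 F t).slope x0 x0 (4*x0) (4*x0) = 5 - t^2 := by
    have hden : (4*x0 : F) - -(4*x0) ≠ 0 := fun h => mul_ne_zero h8 hx0 (by linear_combination h)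
    rw [slope_of_Y_ne rfl hyP, hneg, div_eq_iff hden]
    simp only [F26, hx0def]; ring
  -- P + P = Q
  have hPP : Point.some _ _ hP + Point.some _ _ hP = Point.some _ _ hQ := by
    rw [add_self_of_Y_ne hyP]
    exact some_eq_some'
      (by rw [hs1]; simp only [WeierstrassCurve.Affine.addX, F26, hx0def]; ring)
      (by rw [hs1]; simp only [WeierstrassCurve.Affine.addY, WeierstrassCurve.Affine.negAddY,
            WeierstrassCurve.Affine.addX, WeierstrassCurve.Affine.negY, F26, hx0def]; ring) _ _
  -- Q + P = T
  have hxQP : ((t^2-1)^2 : F) ≠ x0 := by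
    intro h
    exact mul_ne_zero h8 (mul_ne_zero hm1 hp1) (by linear_combination h)
  have hs2 : (F26 F t).slope ((t^2-1)^2) x0 (4*(t^2-1)^2) (4*x0) = 4 := by
    rw [slope_of_X_ne hxQP, div_eq_iff (sub_ne_zero.mpr hxQP), hx0def]; ring
  have hQP : Point.some _ _ hQ + Point.some _ _ hP = Point.some _ _ hT := by
    rw [add_of_X_ne hxQP]
    exact some_eq_some'
      (by rw [hs2]; simp only [WeierstrassCurve.Affine.addX, F26, hx0def]; ring)
      (by rw [hs2]; simp only [WeierstrassCurve.Affine.addY, WeierstrassCurve.Affine.negAddY,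
            WeierstrassCurve.Affine.addX, WeierstrassCurve.Affine.negY, F26, hx0def]; ring) _ _
  -- T + T = 0
  have hTT : Point.some _ _ hT + Point.some _ _ hT = 0 :=
    add_of_Y_eq rfl (by rw [hneg]; ring)
  refine ⟨hP, ?_⟩
  set P := Point.some _ _ hP with hPdef
  have e2 : 2 • P = Point.some _ _ hQ := by rw [two_nsmul]; exact hPP
  have e3 : 3 • P = Point.some _ _ hT := by
    rw [show (3:ℕ) = 2 + 1 from rfl, add_nsmul, e2, one_nsmul]; exact hQP
  have e6 : 6 • P = 0 := by
    rw [show (6:ℕ) = 3 + 3 from rfl, add_nsmul, e3]; exact hTT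
  have hdvd : addOrderOf P ∣ 6 := addOrderOf_dvd_of_nsmul_eq_zero e6
  have hne : addOrderOf P ≠ 0 := by
    intro h; rw [h] at hdvd; exact (by norm_num : ¬ ((0:ℕ) ∣ 6)) hdvd
  have hle : addOrderOf P ≤ 6 := Nat.le_of_dvd (by norm_num) hdvd
  have hnsmul : addOrderOf P • P = 0 := addOrderOf_nsmul_eq_zero P
  interval_cases h : addOrderOf P
  · exact absurd rfl hne
  · rw [one_nsmul] at hnsmul; exact absurd hnsmul (some_ne_zero hP)
  · rw [e2] at hnsmul; exact absurd hnsmul (some_ne_zero hQ)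
  · rw [e3] at hnsmul; exact absurd hnsmul (some_ne_zero hT)
  · norm_num at hdvd
  · norm_num at hdvd
  · rfl
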